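/- The trace-dual of a linear MRD code is MRD: if C ⊆ Mat(k,m,F_q) (k ≤ m) is a linear code attaining the Singleton-like bound, then C⊥ also attains it; moreover, if 1 ≤ dim C ≤ km−1, then d(C) + d(C⊥) = k + 2. -/

import Mathlib

open Matrix Module

section Helpers

variable {F : Type*} [Field F] {k m : ℕ}

private lemma trace_mul_transpose_eq_sum (M N : Matrix (Fin k) (Fin m) F) :
    (M * Nᵀ).trace = ∑ i, ∑ j, M i j * N i j := by
  simp [Matrix.trace, Matrix.mul_apply, Matrix.diag]

private lemma trace_stdBasis (i : Fin k) (j : Fin m) (V : Matrix (Fin k) (Fin m) F) :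
    (Matrix.single i j (1 : F) * Vᵀ).trace = V i j := by
  rw [trace_mul_transpose_eq_sum]
  simp [Matrix.single, ite_and, Finset.sum_ite_eq, Finset.sum_ite_eq']

/-- The trace bilinear pairing as a map into the dual. -/
private noncomputable def tracePairing (F : Type*) [Field F] (k m : ℕ) :
    Matrix (Fin k) (Fin m) F →ₗ[F] Module.Dual F (Matrix (Fin k) (Fin m) F) where
  toFun N :=
    { toFun := fun M => (M * Nᵀ).trace
      map_add' := fun M₁ M₂ => by simp [Matrix.add_mul]
      map_smul' := fun c M => by simp [Matrix.smul_mul] }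
  map_add' N₁ N₂ := by
    ext M; simp [Matrix.transpose_add, Matrix.mul_add]
  map_smul' c N := by
    ext M; simp [Matrix.transpose_smul, Matrix.mul_smul]

private lemma tracePairing_injective :
    Function.Injective (tracePairing F k m) := by
  rw [injective_iff_map_eq_zero]
  intro N hN
  ext i j
  have := congrArg (fun f : Module.Dual F (Matrix (Fin k) (Fin m) F) =>
    f (Matrix.single i j (1 : F))) hN
  simpa [tracePairing, trace_stdBasis] using this

end Helpers
section Helpers2

variable {F : Type*} [Field F] {k m : ℕ}

private lemma finrank_perp_add (C Cperp : Submodule F (Matrix (Fin k) (Fin m) F))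
    (hperp : (Cperp : Set (Matrix (Fin k) (Fin m) F)) = {N | ∀ M ∈ C, (M * Nᵀ).trace = 0}) :
    finrank F Cperp + finrank F C = k * m := by
  have hC : Cperp = (Submodule.dualAnnihilator C).comap (tracePairing F k m) := by
    ext N
    have hN : N ∈ Cperp ↔ ∀ M ∈ C, (M * Nᵀ).trace = 0 := by
      rw [← SetLike.mem_coe, hperp]; rfl
    rw [hN, Submodule.mem_comap, Submodule.mem_dualAnnihilator]
    rfl
  let e : Matrix (Fin k) (Fin m) F ≃ₗ[F] Module.Dual F (Matrix (Fin k) (Fin m) F) :=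
    LinearMap.linearEquivOfInjective (tracePairing F k m) tracePairing_injective
      (Subspace.dual_finrank_eq).symm
  have he : Cperp = (Submodule.dualAnnihilator C).comap (e : Matrix (Fin k) (Fin m) F →ₗ[F] _) := by
    rw [hC]; rfl
  have h1 : finrank F Cperp = finrank F (Submodule.dualAnnihilator C) := by
    rw [he]
    exact LinearEquiv.finrank_eq (LinearEquiv.ofSubmodule' e (Submodule.dualAnnihilator C))
  have h2 : finrank F (Submodule.dualAnnihilator C)
      = finrank F (Matrix (Fin k) (Fin m) F ⧸ C) :=
    (LinearEquiv.finrank_eq (Subspace.quotEquivAnnihilator C)).symm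
  have h3 := Submodule.finrank_quotient_add_finrank C
  have h4 : finrank F (Matrix (Fin k) (Fin m) F) = k * m := by
    rw [Module.finrank_matrix]
    simp
  omega

end Helpers2
section Helpers3

variable {F : Type*} [Field F] {k m : ℕ}

private lemma col_mem_range_mulVecLin (N : Matrix (Fin k) (Fin m) F) (j : Fin m) :
    (fun i => N i j) ∈ LinearMap.range N.mulVecLin := by
  refine ⟨Pi.single j 1, ?_⟩
  ext i
  simp [Matrix.mulVecLin, Matrix.mulVec, dotProduct, Pi.single_apply, mul_ite]

private lemma rank_pos_of_ne_zero {N : Matrix (Fin k) (Fin m) F} (hN : N ≠ 0) :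
    1 ≤ N.rank := by
  by_contra h
  have h0 : N.rank = 0 := by omega
  apply hN
  have : LinearMap.range N.mulVecLin = ⊥ := by
    rw [Matrix.rank] at h0
    exact Submodule.finrank_eq_zero.mp h0
  ext i j
  have hmem := col_mem_range_mulVecLin N j
  rw [this] at hmem
  have h2 : (fun i => N i j) = (0 : Fin k → F) := by simpa using hmem
  simpa using congrFun h2 i

/-- Singleton-like bound for rank-metric codes. -/
private lemma singleton_bound (C : Submodule F (Matrix (Fin k) (Fin m) F)) (δ : ℕ)
    (hδ1 : 1 ≤ δ) (hδk : δ ≤ k + 1)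
    (h : ∀ M ∈ C, M ≠ 0 → δ ≤ M.rank) :
    finrank F C ≤ m * (k + 1 - δ) := by
  classical
  set s := k + 1 - δ with hs
  have hsk : s ≤ k := by omega
  let π : Matrix (Fin k) (Fin m) F →ₗ[F] Matrix (Fin s) (Fin m) F :=
    { toFun := fun M => Matrix.of (fun i j => M (Fin.castLE hsk i) j)
      map_add' := fun M₁ M₂ => rfl
      map_smul' := fun c M => rfl }
  have hinj : Function.Injective (π.comp C.subtype) := by
    rw [← LinearMap.ker_eq_bot, LinearMap.ker_eq_bot']
    rintro ⟨M, hM⟩ hzero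
    have hrow : ∀ i : Fin k, (i : ℕ) < s → M i = 0 := by
      intro i hi
      funext j
      have := congrFun (congrFun (congrArg (fun X : Matrix (Fin s) (Fin m) F => (X : Fin s → Fin m → F)) hzero) ⟨i, hi⟩) j
      exact this
    -- M has rank at most k - s < δ
    have hM0 : M = 0 := by
      by_contra hMne
      have hd := h M hM hMne
      have hle : M.rank ≤ k - s := by
        rw [Matrix.rank_eq_finrank_span_row]
        set g : Fin (k - s) → Fin k := fun i => ⟨s + (i : ℕ), by omega⟩ with hg
        have hsub : Submodule.span F (Set.range M) ≤ Submodule.span F (Set.range (M ∘ g)) := by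
          rw [Submodule.span_le]
          rintro _ ⟨i, rfl⟩
          by_cases hi : (i : ℕ) < s
          · rw [hrow i hi]; exact Submodule.zero_mem _
          · have : i = g ⟨(i : ℕ) - s, by omega⟩ := by
              apply Fin.ext; simp [hg]; omega
            rw [this]
            exact Submodule.subset_span ⟨_, rfl⟩
        refine le_trans (Submodule.finrank_mono hsub) ?_
        refine le_trans (finrank_span_le_card (Set.range (M ∘ g))) ?_
        rw [Set.toFinset_range]
        exact le_trans (Finset.card_image_le) (by simp)
      omega
    exact Subtype.ext hM0
  have hle2 := LinearMap.finrank_le_finrank_of_injective hinj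
  have h4 : finrank F (Matrix (Fin s) (Fin m) F) = m * s := by
    rw [Module.finrank_matrix]; simp [Nat.mul_comm]
  rwa [h4] at hle2

end Helpers3
section Helpers4

variable {F : Type*} [Field F]

private lemma exists_superspace_aux {V : Type*} [AddCommGroup V] [Module F V]
    [FiniteDimensional F V] (j : ℕ) : ∀ (W₀ : Submodule F V),
    finrank F W₀ + j ≤ finrank F V →
    ∃ W : Submodule F V, W₀ ≤ W ∧ finrank F W = finrank F W₀ + j := by
  induction j with
  | zero => exact fun W₀ _ => ⟨W₀, le_refl _, by simp⟩
  | succ j ih =>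
    intro W₀ hle
    have hlt : finrank F W₀ < finrank F V := by omega
    have hne : W₀ ≠ ⊤ := by
      intro htop
      rw [htop, finrank_top] at hlt
      omega
    obtain ⟨x, hx⟩ : ∃ x, x ∉ W₀ := by
      by_contra hall
      push_neg at hall
      exact hne (Submodule.eq_top_iff'.mpr hall)
    have hx0 : x ≠ 0 := fun h => hx (h ▸ W₀.zero_mem)
    set W₁ := W₀ ⊔ (F ∙ x) with hW₁
    have hfr : finrank F W₁ = finrank F W₀ + 1 := by
      have hsum := Submodule.finrank_sup_add_finrank_inf_eq W₀ (F ∙ x)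
      have hspan : finrank F (F ∙ x) = 1 := finrank_span_singleton hx0
      have hlt1 : W₀ < W₁ := by
        rw [hW₁]
        refine lt_of_le_of_ne le_sup_left ?_
        intro heq
        exact hx (heq ▸ Submodule.mem_sup_right (Submodule.mem_span_singleton_self x))
      have h1 : finrank F W₀ < finrank F W₁ := Submodule.finrank_lt_finrank_of_lt hlt1
      have h2 : finrank F W₁ + finrank F ↥(W₀ ⊓ (F ∙ x) : Submodule F V) = finrank F W₀ + 1 := by
        rw [← hspan]; exact hsum
      omega
    obtain ⟨W, hWW, hWfr⟩ := ih W₁ (by omega)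
    exact ⟨W, le_trans le_sup_left hWW, by omega⟩

private lemma exists_superspace {V : Type*} [AddCommGroup V] [Module F V]
    [FiniteDimensional F V] (W₀ : Submodule F V) (s : ℕ) (h1 : finrank F W₀ ≤ s)
    (h2 : s ≤ finrank F V) : ∃ W : Submodule F V, W₀ ≤ W ∧ finrank F W = s := by
  obtain ⟨j, hj⟩ := Nat.exists_eq_add_of_le h1
  obtain ⟨W, hW, hWfr⟩ := exists_superspace_aux j W₀ (by omega)
  exact ⟨W, hW, by omega⟩

end Helpers4
section Helpers5

variable {F : Type*} [Field F] {k m : ℕ}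

private lemma dual_rank_lb (hkm : k ≤ m) (C Cperp : Submodule F (Matrix (Fin k) (Fin m) F))
    (hperp : (Cperp : Set (Matrix (Fin k) (Fin m) F)) = {N | ∀ M ∈ C, (M * Nᵀ).trace = 0})
    (d : ℕ) (hd1 : 1 ≤ d) (hdk : d ≤ k)
    (hrank : ∀ M ∈ C, M ≠ 0 → d ≤ M.rank)
    (hdim : finrank F C = m * (k + 1 - d))
    (N : Matrix (Fin k) (Fin m) F) (hN : N ∈ Cperp) (hNr : N.rank ≤ k + 1 - d) :
    N = 0 := by
  classical
  by_contra hN0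
  set s := k + 1 - d with hs
  have hs1 : 1 ≤ s := by omega
  have hsk : s ≤ k := by omega
  have hWle : finrank F (LinearMap.range N.mulVecLin) ≤ s := hNr
  obtain ⟨W, hW0W, hWs⟩ := exists_superspace (LinearMap.range N.mulVecLin) s hWle
    (by rw [finrank_fintype_fun_eq_card]; simpa using hsk)
  set b : Basis (Fin s) F W := finBasisOfFinrankEq F W hWs with hb
  set A : Matrix (Fin s) (Fin k) F := Matrix.of (fun i j => (b i : Fin k → F) j) with hA
  have hAind : LinearIndependent F (fun i : Fin s => (A i : Fin k → F)) := by
    have : (fun i : Fin s => (A i : Fin k → F)) = (W.subtype ∘ b) := rfl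
    rw [this]
    exact b.linearIndependent.map' W.subtype (Submodule.ker_subtype W)
  have hArank : A.rank = s := by
    have := hAind.rank_matrix
    simpa using this
  have hAker : finrank F (LinearMap.ker A.mulVecLin) = k - s := by
    have h1 := LinearMap.finrank_range_add_finrank_ker A.mulVecLin
    rw [finrank_fintype_fun_eq_card, Fintype.card_fin] at h1
    have hr : finrank F (LinearMap.range A.mulVecLin) = s := hArank
    omega
  set ψ : Matrix (Fin k) (Fin m) F →ₗ[F] Matrix (Fin s) (Fin m) F :=
    { toFun := fun M => A * M
      map_add' := fun M₁ M₂ => Matrix.mul_add A M₁ M₂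
      map_smul' := fun c M => Matrix.mul_smul A c M } with hψ
  have hinj : Function.Injective (ψ.comp C.subtype) := by
    rw [← LinearMap.ker_eq_bot, LinearMap.ker_eq_bot']
    rintro ⟨M, hM⟩ hzero
    have hAM : A * M = 0 := hzero
    have hMrank : M.rank ≤ k - s := by
      refine le_trans (α := ℕ) ?_ (le_of_eq hAker)
      refine Submodule.finrank_mono ?_
      rintro _ ⟨x, rfl⟩
      rw [LinearMap.mem_ker]
      show A.mulVec (M.mulVec x) = 0
      rw [Matrix.mulVec_mulVec, hAM, Matrix.zero_mulVec]
    have hM0 : M = 0 := by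
      by_contra hMne
      have := hrank M hM hMne
      omega
    exact Subtype.ext hM0
  have hfr : finrank F C = finrank F (Matrix (Fin s) (Fin m) F) := by
    rw [hdim, Module.finrank_matrix]; simp [Nat.mul_comm]
  set e := LinearMap.linearEquivOfInjective (ψ.comp C.subtype) hinj hfr with he
  have hcol : ∀ j, (fun i => N i j) ∈ W := fun j => hW0W (col_mem_range_mulVecLin N j)
  set cvec : Fin m → W := fun j => ⟨fun i => N i j, hcol j⟩ with hcvec
  set Vm : Matrix (Fin s) (Fin m) F := Matrix.of (fun i j => b.repr (cvec j) i) with hVm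
  have hNV : N = Aᵀ * Vm := by
    ext p q
    have h2 : ∑ i, b.repr (cvec q) i * (b i : Fin k → F) p = N p q := by
      have h3 := congrArg (fun w : W => (w : Fin k → F) p) (b.sum_repr (cvec q))
      simpa [Finset.sum_apply, -Basis.sum_repr] using h3
    rw [Matrix.mul_apply, ← h2]
    refine Finset.sum_congr rfl (fun i _ => ?_)
    rw [Matrix.transpose_apply, hA, hVm]
    simp [mul_comm]
  have hVne : Vm ≠ 0 := by
    intro hV0
    exact hN0 (by rw [hNV, hV0, Matrix.mul_zero])
  obtain ⟨i0, j0, hV⟩ : ∃ i0 j0, Vm i0 j0 ≠ 0 := by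
    by_contra hc
    push_neg at hc
    exact hVne (by ext i j; simpa using hc i j)
  set Mc := e.symm (Matrix.single i0 j0 (1 : F)) with hMc
  have hAMc : A * (Mc : Matrix (Fin k) (Fin m) F) = Matrix.single i0 j0 (1 : F) := by
    have h4 := e.apply_symm_apply (Matrix.single i0 j0 (1 : F))
    rw [he] at h4
    rw [LinearMap.linearEquivOfInjective_apply] at h4
    exact h4
  have hNmem : ∀ M ∈ C, (M * Nᵀ).trace = 0 := by
    have hmem : N ∈ (Cperp : Set (Matrix (Fin k) (Fin m) F)) := hN
    rw [hperp] at hmem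
    exact hmem
  have h0 := hNmem (Mc : Matrix (Fin k) (Fin m) F) Mc.2
  rw [hNV] at h0
  have h5 : (((Mc : Matrix (Fin k) (Fin m) F)) * (Aᵀ * Vm)ᵀ).trace = Vm i0 j0 := by
    rw [Matrix.transpose_mul, Matrix.transpose_transpose, ← Matrix.mul_assoc,
      Matrix.trace_mul_comm, ← Matrix.mul_assoc, hAMc, trace_stdBasis]
  rw [h5] at h0
  exact hV h0

end Helpers5
/-- The trace-dual of a linear MRD code is MRD; moreover, if `1 ≤ dim C ≤ km - 1`,
then `d(C) + d(C⊥) = k + 2`. A linear code of minimum distance `d` is MRD when its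
dimension is `m(k - d + 1)` (codes of dimension `0` or `km` are MRD by convention). -/
theorem dual_of_MRD_is_MRD (F : Type*) [Field F] [Fintype F] (k m : ℕ) (hkm : k ≤ m)
    (C Cperp : Submodule F (Matrix (Fin k) (Fin m) F))
    (hperp : (Cperp : Set (Matrix (Fin k) (Fin m) F)) = {N | ∀ M ∈ C, (M * Nᵀ).trace = 0})
    (d dperp : ℕ)
    (hd : d = sInf {r : ℕ | ∃ M ∈ C, M ≠ 0 ∧ M.rank = r})
    (hdp : dperp = sInf {r : ℕ | ∃ N ∈ Cperp, N ≠ 0 ∧ N.rank = r})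
    (hMRD : finrank F C = 0 ∨ finrank F C = k * m ∨ finrank F C = m * (k + 1 - d)) :
    (finrank F Cperp = 0 ∨ finrank F Cperp = k * m ∨
        finrank F Cperp = m * (k + 1 - dperp)) ∧
      (1 ≤ finrank F C → finrank F C ≤ k * m - 1 → d + dperp = k + 2) := by
  classical
  have hperp_dim := finrank_perp_add C Cperp hperp
  have core : finrank F C = m * (k + 1 - d) → 1 ≤ finrank F C → finrank F C < k * m →
      d + dperp = k + 2 ∧ finrank F Cperp = m * (k + 1 - dperp) := by
    intro hdim hge hlt
    have hmul : 1 ≤ m * (k + 1 - d) := hdim ▸ hge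
    have hm1 : 0 < m := by
      rcases Nat.eq_zero_or_pos m with h | h
      · rw [h] at hmul; simp at hmul
      · exact h
    have hsd : 0 < k + 1 - d := by
      rcases Nat.eq_zero_or_pos (k + 1 - d) with h | h
      · rw [h] at hmul; simp at hmul
      · exact h
    have hdk : d ≤ k := by omega
    have hd2 : 2 ≤ d := by
      by_contra h
      have hk : k ≤ k + 1 - d := by omega
      have hmk : m * k ≤ m * (k + 1 - d) := Nat.mul_le_mul_left m hk
      have hcontra : k * m < k * m :=
        lt_of_le_of_lt (le_trans (le_of_eq (Nat.mul_comm k m)) hmk) (hdim ▸ hlt)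
      exact absurd hcontra (lt_irrefl _)
    have hCne : C ≠ ⊥ := by
      intro h
      rw [h, finrank_bot] at hge
      omega
    obtain ⟨M₀, hM₀C, hM₀⟩ := Submodule.exists_mem_ne_zero_of_ne_bot hCne
    have hdmem : d ∈ {r : ℕ | ∃ M ∈ C, M ≠ 0 ∧ M.rank = r} :=
      hd ▸ Nat.sInf_mem ⟨M₀.rank, M₀, hM₀C, hM₀, rfl⟩
    obtain ⟨Md, hMdC, hMdne, hMdr⟩ := hdmem
    have hd1 : 1 ≤ d := hMdr ▸ rank_pos_of_ne_zero hMdne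
    have hrank : ∀ M ∈ C, M ≠ 0 → d ≤ M.rank := fun M hMC hMne =>
      hd ▸ Nat.sInf_le ⟨M, hMC, hMne, rfl⟩
    have hdualrank : ∀ Nn ∈ Cperp, Nn ≠ 0 → k + 2 - d ≤ Nn.rank := by
      intro Nn hNn hNne
      by_contra h
      exact hNne (dual_rank_lb hkm C Cperp hperp d hd1 hdk hrank hdim Nn hNn (by omega))
    have hCpne : 1 ≤ finrank F Cperp := by
      have h9 : finrank F C < finrank F Cperp + finrank F C :=
        lt_of_lt_of_le hlt (le_of_eq hperp_dim.symm)
      omega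
    have hCpbot : Cperp ≠ ⊥ := by
      intro h
      rw [h, finrank_bot] at hCpne
      omega
    obtain ⟨N₀, hN₀C, hN₀⟩ := Submodule.exists_mem_ne_zero_of_ne_bot hCpbot
    have hdpmem : dperp ∈ {r : ℕ | ∃ N ∈ Cperp, N ≠ 0 ∧ N.rank = r} :=
      hdp ▸ Nat.sInf_mem ⟨N₀.rank, N₀, hN₀C, hN₀, rfl⟩
    obtain ⟨Nd, hNdC, hNdne, hNdr⟩ := hdpmem
    have hdpk : dperp ≤ k := by
      rw [← hNdr]
      simpa using Nd.rank_le_card_height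
    have hdplb : k + 2 - d ≤ dperp := hNdr ▸ hdualrank Nd hNdC hNdne
    have hdprank : ∀ Nn ∈ Cperp, Nn ≠ 0 → dperp ≤ Nn.rank := fun Nn h1 h2 =>
      hdp ▸ Nat.sInf_le ⟨Nn, h1, h2, rfl⟩
    have hdp1 : 1 ≤ dperp := hNdr ▸ rank_pos_of_ne_zero hNdne
    have hCpdim : finrank F Cperp = m * (d - 1) := by
      have h7 : m * (d - 1) + m * (k + 1 - d) = k * m := by
        rw [← Nat.mul_add, Nat.mul_comm]
        congr 1
        omega
      have h8 : finrank F Cperp + m * (k + 1 - d) = m * (d - 1) + m * (k + 1 - d) := by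
        rw [h7, ← hdim]
        exact hperp_dim
      exact Nat.add_right_cancel h8
    have hub := singleton_bound Cperp dperp hdp1 (by omega) hdprank
    rw [hCpdim] at hub
    have hd1le : d - 1 ≤ k + 1 - dperp := Nat.le_of_mul_le_mul_left hub hm1
    have hdpeq : dperp = k + 2 - d := by omega
    refine ⟨by omega, ?_⟩
    rw [hCpdim]
    congr 1
    omega
  constructor
  · rcases hMRD with h0 | hfull | hmrd
    · right; left
      rw [h0] at hperp_dim
      simpa using hperp_dim
    · left
      rw [hfull] at hperp_dim
      exact right_eq_add.mp hperp_dim.symm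
    · rcases Nat.eq_zero_or_pos (finrank F C) with hz | hpos
      · right; left
        rw [hz] at hperp_dim
        simpa using hperp_dim
      · rcases lt_or_ge (finrank F C) (k * m) with hlt | hge2
        · right; right
          exact (core hmrd hpos hlt).2
        · left
          have h9 : finrank F Cperp + finrank F C ≤ finrank F C :=
            le_trans (le_of_eq hperp_dim) hge2
          omega
  · intro h1 h2
    have hnle : finrank F C ≤ k * m :=
      le_trans (Nat.le_add_left _ _) (le_of_eq hperp_dim)
    have hlt : finrank F C < k * m := by
      generalize hG : k * m = G at h2 hnle
      omega
    rcases hMRD with h0 | hfull | hmrd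
    · omega
    · rw [hfull] at hlt
      exact absurd hlt (lt_irrefl _)
    · exact (core hmrd h1 hlt).1
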